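/- Let S = D_1 × … × D_n be a product of finite nonempty sets with D = max_i |D_i|, let 𝒫 be a product probability distribution on S, and let f_1, …, f_N : S → {0,1} be Boolean functions, each of decision tree complexity at most k, with ∑_{j=1}^N E_{x∼𝒫}[f_j(x)] ≤ 1/2. If 𝒴 is a probability distribution on S that is a (k,δ)-approximation of 𝒫 with N·D^k·δ < 1/2, then ∑_{j=1}^N E_{x∼𝒴}[f_j(x)] < 1; consequently there exists a point s ∈ S with 𝒴(s) > 0 and f_j(s) = 0 for every j. -/

import Mathlib

/-- A decision tree over the product space `∀ i : Fin n, D i`. -/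
inductive DTree {n : ℕ} (D : Fin n → Type*) : Type _ where
  | leaf : Bool → DTree D
  | node : (i : Fin n) → (D i → DTree D) → DTree D

/-- Evaluation of a decision tree on an input. -/
def DTree.eval {n : ℕ} {D : Fin n → Type*} : DTree D → (∀ i, D i) → Bool
  | .leaf b, _ => b
  | .node i f, x => (f (x i)).eval x

/-- The decision tree has depth at most `k`. -/
def DTree.depthLE {n : ℕ} {D : Fin n → Type*} : DTree D → ℕ → Prop
  | .leaf _, _ => True
  | .node _ _, 0 => False
  | .node _ f, k + 1 => ∀ d, (f d).depthLE k

/-- `f` has decision tree complexity at most `k`. -/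
def DTComplexityLE {n : ℕ} (D : Fin n → Type*) (f : (∀ i, D i) → Bool) (k : ℕ) : Prop :=
  ∃ t : DTree D, t.depthLE k ∧ ∀ x, t.eval x = f x

def DTree.trueLeaves {n : ℕ} {D : Fin n → Type*} [∀ i, Fintype (D i)] : DTree D → ℕ
  | .leaf b => if b then 1 else 0
  | .node _ ch => ∑ d, (ch d).trueLeaves

lemma trueLeaves_le {n : ℕ} {D : Fin n → Type*} [∀ i, Fintype (D i)]
    (Dmax : ℕ) (hD : ∀ i, Fintype.card (D i) ≤ Dmax) (hD1 : 1 ≤ Dmax)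
    (t : DTree D) : ∀ k, t.depthLE k → t.trueLeaves ≤ Dmax ^ k := by
  induction t with
  | leaf b =>
    intro k _
    have : DTree.trueLeaves (D := D) (.leaf b) ≤ 1 := by
      simp only [DTree.trueLeaves]; split <;> omega
    exact this.trans (Nat.one_le_pow _ _ hD1)
  | node i ch ih =>
    intro k h
    cases k with
    | zero => exact absurd h id
    | succ k =>
      show ∑ d, (ch d).trueLeaves ≤ Dmax ^ (k + 1)
      calc ∑ d, (ch d).trueLeaves ≤ ∑ _d : D i, Dmax ^ k :=
            Finset.sum_le_sum fun d _ => ih d k (h d)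
        _ = Fintype.card (D i) * Dmax ^ k := by
            simp [Finset.sum_const, Finset.card_univ, smul_eq_mul]
        _ ≤ Dmax * Dmax ^ k := Nat.mul_le_mul_right _ (hD i)
        _ = Dmax ^ (k + 1) := (pow_succ' Dmax k).symm

lemma key_bound {n : ℕ} {D : Fin n → Type*} [∀ i, Fintype (D i)] [∀ i, DecidableEq (D i)]
    (g : (∀ i, D i) → ℝ) (δ : ℝ) (hδ : 0 ≤ δ) (K : ℕ)
    (happrox : ∀ I : Finset (Fin n), I.card ≤ K → ∀ v : ∀ i, D i,
      |∑ x ∈ Finset.univ.filter (fun x : ∀ i, D i => ∀ i ∈ I, x i = v i), g x| ≤ δ)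
    (t : DTree D) : ∀ (k : ℕ), t.depthLE k →
      ∀ (I : Finset (Fin n)) (v : ∀ i, D i), I.card + k ≤ K →
      |∑ x ∈ Finset.univ.filter
          (fun x : ∀ i, D i => (∀ i ∈ I, x i = v i) ∧ t.eval x = true), g x|
        ≤ (t.trueLeaves : ℝ) * δ := by
  induction t with
  | leaf b =>
    intro k _ I v hIk
    cases b with
    | false => simp [DTree.eval, DTree.trueLeaves]
    | true =>
      have h := happrox I (le_trans (Nat.le_add_right _ _) hIk) v
      have heq : Finset.univ.filter
          (fun x : ∀ i, D i => (∀ i ∈ I, x i = v i) ∧ (DTree.leaf true : DTree D).eval x = true)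
          = Finset.univ.filter (fun x : ∀ i, D i => ∀ i ∈ I, x i = v i) := by
        apply Finset.filter_congr; intro x _; simp [DTree.eval]
      rw [heq]
      simpa [DTree.trueLeaves] using h
  | node i ch ih =>
    intro k hdep I v hIk
    cases k with
    | zero => exact absurd hdep id
    | succ k =>
      by_cases hiI : i ∈ I
      · have heq : Finset.univ.filter
            (fun x : ∀ i, D i => (∀ j ∈ I, x j = v j) ∧ (DTree.node i ch).eval x = true)
            = Finset.univ.filter
            (fun x : ∀ i, D i => (∀ j ∈ I, x j = v j) ∧ (ch (v i)).eval x = true) := by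
          apply Finset.filter_congr; intro x _
          constructor
          · rintro ⟨h1, h2⟩
            refine ⟨h1, ?_⟩
            have hx : x i = v i := h1 i hiI
            rw [show (DTree.node i ch).eval x = (ch (x i)).eval x from rfl, hx] at h2
            exact h2
          · rintro ⟨h1, h2⟩
            refine ⟨h1, ?_⟩
            have hx : x i = v i := h1 i hiI
            show (ch (x i)).eval x = true
            rw [hx]; exact h2
        rw [heq]
        refine le_trans (ih (v i) k (hdep (v i)) I v (by omega)) ?_
        apply mul_le_mul_of_nonneg_right _ hδ
        exact_mod_cast Finset.single_le_sum (f := fun d => (ch d).trueLeaves)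
          (fun d _ => Nat.zero_le _) (Finset.mem_univ (v i))
      · have hsplit : ∑ x ∈ Finset.univ.filter
            (fun x : ∀ i, D i => (∀ j ∈ I, x j = v j) ∧ (DTree.node i ch).eval x = true), g x
            = ∑ d : D i, ∑ x ∈ Finset.univ.filter
              (fun x : ∀ i, D i => (∀ j ∈ insert i I, x j = Function.update v i d j)
                ∧ (ch d).eval x = true), g x := by
          rw [← Finset.sum_fiberwise (g := fun x : ∀ i, D i => x i)]
          apply Finset.sum_congr rfl
          intro d _
          apply Finset.sum_congr _ (fun _ _ => rfl)
          rw [Finset.filter_filter]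
          apply Finset.filter_congr; intro x _
          constructor
          · rintro ⟨⟨h1, h2⟩, h3⟩
            refine ⟨?_, ?_⟩
            · intro j hj
              rcases Finset.mem_insert.mp hj with rfl | hj
              · rw [h3, Function.update_self]
              · have hji : j ≠ i := fun h => hiI (h ▸ hj)
                rw [Function.update_of_ne hji]
                exact h1 j hj
            · have : (DTree.node i ch).eval x = (ch (x i)).eval x := rfl
              rw [this, h3] at h2
              exact h2
          · rintro ⟨h1, h2⟩
            have hx : x i = d := by
              have := h1 i (Finset.mem_insert_self i I)
              rwa [Function.update_self] at this
            refine ⟨⟨?_, ?_⟩, hx⟩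
            · intro j hj
              have hji : j ≠ i := fun h => hiI (h ▸ hj)
              have := h1 j (Finset.mem_insert_of_mem hj)
              rwa [Function.update_of_ne hji] at this
            · show (ch (x i)).eval x = true
              rw [hx]; exact h2
        rw [hsplit]
        refine le_trans (Finset.abs_sum_le_sum_abs _ _) ?_
        have hcard : (insert i I).card = I.card + 1 := Finset.card_insert_of_notMem hiI
        calc ∑ d : D i, |∑ x ∈ Finset.univ.filter
              (fun x : ∀ i, D i => (∀ j ∈ insert i I, x j = Function.update v i d j)
                ∧ (ch d).eval x = true), g x|
            ≤ ∑ d : D i, ((ch d).trueLeaves : ℝ) * δ :=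
              Finset.sum_le_sum fun d _ =>
                ih d k (hdep d) (insert i I) (Function.update v i d) (by omega)
          _ = ((DTree.node i ch).trueLeaves : ℝ) * δ := by
              rw [show (DTree.node i ch).trueLeaves = ∑ d, (ch d).trueLeaves from rfl]
              push_cast
              rw [Finset.sum_mul]

/-- **Abstract parallel derandomization.**
`p i` are the marginals of a product distribution `𝒫` on `S = ∀ i, D i`
(so `𝒫 x = ∏ i, p i (x i)`), and `f 1, …, f N` have decision tree complexity
at most `k` with `∑ j, E_𝒫[f j] ≤ 1/2`.  If `Y` is a distribution on `S` that
is a `(k,δ)`-approximation of `𝒫` with `N · Dmax^k · δ < 1/2`, then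
`∑ j, E_Y[f j] < 1`; consequently some point `s` of positive `Y`-probability
satisfies `f j s = false` for every `j`. -/
theorem limited_independence_point_avoiding_all_events {n : ℕ} (D : Fin n → Type*)
    [∀ i, Fintype (D i)] [∀ i, Nonempty (D i)] [∀ i, DecidableEq (D i)]
    (Dmax : ℕ) (hD : ∀ i, Fintype.card (D i) ≤ Dmax)
    (p : ∀ i, D i → ℝ) (hp0 : ∀ i d, 0 ≤ p i d) (hp1 : ∀ i, ∑ d, p i d = 1)
    (Y : (∀ i, D i) → ℝ) (hY0 : ∀ x, 0 ≤ Y x) (hY1 : ∑ x, Y x = 1)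
    (k N : ℕ) (f : Fin N → (∀ i, D i) → Bool)
    (hf : ∀ j, DTComplexityLE D (f j) k)
    (hexp : ∑ j : Fin N,
        ∑ x ∈ Finset.univ.filter (fun x : ∀ i, D i => f j x = true), ∏ i, p i (x i)
      ≤ 1 / 2)
    (δ : ℝ) (hδ : 0 ≤ δ)
    (happrox : ∀ I : Finset (Fin n), I.card ≤ k → ∀ v : ∀ i, D i,
      |∑ x ∈ Finset.univ.filter (fun x : ∀ i, D i => ∀ i ∈ I, x i = v i), ∏ i, p i (x i)
        - ∑ x ∈ Finset.univ.filter (fun x : ∀ i, D i => ∀ i ∈ I, x i = v i), Y x| ≤ δ)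
    (hsmall : (N : ℝ) * (Dmax : ℝ) ^ k * δ < 1 / 2) :
    (∑ j : Fin N,
        ∑ x ∈ Finset.univ.filter (fun x : ∀ i, D i => f j x = true), Y x) < 1 ∧
      ∃ s : ∀ i, D i, 0 < Y s ∧ ∀ j, f j s = false := by
  classical
  set g : (∀ i, D i) → ℝ := fun x => (∏ i, p i (x i)) - Y x with hg
  have happrox' : ∀ I : Finset (Fin n), I.card ≤ k → ∀ v : ∀ i, D i,
      |∑ x ∈ Finset.univ.filter (fun x : ∀ i, D i => ∀ i ∈ I, x i = v i), g x| ≤ δ := by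
    intro I hI v
    have h := happrox I hI v
    rwa [← Finset.sum_sub_distrib] at h
  have main : (∑ j : Fin N,
      ∑ x ∈ Finset.univ.filter (fun x : ∀ i, D i => f j x = true), Y x) < 1 := by
    rcases Nat.eq_zero_or_pos Dmax with hDm | hDm
    · -- degenerate case: Dmax = 0 forces n = 0
      have hn : n = 0 := by
        by_contra hn
        have hpos : 0 < n := Nat.pos_of_ne_zero hn
        have h1 := hD ⟨0, hpos⟩
        have h2 : 0 < Fintype.card (D ⟨0, hpos⟩) := Fintype.card_pos
        omega
      subst hn
      haveI : Unique (∀ i : Fin 0, D i) :=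
        ⟨⟨fun i => i.elim0⟩, fun x => funext fun i => i.elim0⟩
      have hall : ∀ j, f j default = false := by
        intro j
        by_contra hj
        have hj' : f j default = true := by
          cases h : f j default <;> simp_all
        have hone : ∑ x ∈ Finset.univ.filter
            (fun x : ∀ i : Fin 0, D i => f j x = true), ∏ i, p i (x i) = 1 := by
          rw [Finset.univ_unique]
          rw [Finset.filter_singleton]
          simp [hj']
        have hterm : ∀ j' ∈ (Finset.univ : Finset (Fin N)), (0:ℝ) ≤
            ∑ x ∈ Finset.univ.filter
              (fun x : ∀ i : Fin 0, D i => f j' x = true), ∏ i, p i (x i) := by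
          intro j' _
          exact Finset.sum_nonneg fun x _ => Finset.prod_nonneg fun i _ => hp0 i (x i)
        have := Finset.single_le_sum hterm (Finset.mem_univ j)
        rw [hone] at this
        have hle := this.trans hexp
        norm_num at hle
      have hemp : ∀ j, (Finset.univ.filter
          (fun x : ∀ i : Fin 0, D i => f j x = true)) = ∅ := by
        intro j
        rw [Finset.filter_eq_empty_iff]
        intro x _
        have hx : x = default := Subsingleton.elim _ _
        rw [hx, hall j]
        simp
      simp only [hemp, Finset.sum_empty, Finset.sum_const_zero]
      norm_num
    · -- main case: Dmax ≥ 1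
      have hjbd : ∀ j, |∑ x ∈ Finset.univ.filter (fun x : ∀ i, D i => f j x = true), g x|
          ≤ (Dmax : ℝ) ^ k * δ := by
        intro j
        obtain ⟨t, ht, hev⟩ := hf j
        have v : ∀ i, D i := Classical.arbitrary _
        have heq : Finset.univ.filter (fun x : ∀ i, D i => f j x = true)
            = Finset.univ.filter (fun x : ∀ i, D i =>
                (∀ i ∈ (∅ : Finset (Fin n)), x i = v i) ∧ t.eval x = true) := by
          apply Finset.filter_congr
          intro x _
          simp [hev x]
        rw [heq]
        refine le_trans (key_bound g δ hδ k happrox' t k ht ∅ v (by simp)) ?_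
        apply mul_le_mul_of_nonneg_right _ hδ
        exact_mod_cast trueLeaves_le Dmax hD hDm t k ht
      have hper : ∀ j, ∑ x ∈ Finset.univ.filter (fun x : ∀ i, D i => f j x = true), Y x
          ≤ (∑ x ∈ Finset.univ.filter (fun x : ∀ i, D i => f j x = true), ∏ i, p i (x i))
            + (Dmax : ℝ) ^ k * δ := by
        intro j
        have hsub : ∑ x ∈ Finset.univ.filter (fun x : ∀ i, D i => f j x = true), g x
            = (∑ x ∈ Finset.univ.filter (fun x : ∀ i, D i => f j x = true), ∏ i, p i (x i))
              - ∑ x ∈ Finset.univ.filter (fun x : ∀ i, D i => f j x = true), Y x :=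
          Finset.sum_sub_distrib _ _
        have := abs_le.mp (hjbd j)
        linarith [this.1, this.2, hsub ▸ this.1]
      calc ∑ j : Fin N, ∑ x ∈ Finset.univ.filter (fun x : ∀ i, D i => f j x = true), Y x
          ≤ ∑ j : Fin N, ((∑ x ∈ Finset.univ.filter
              (fun x : ∀ i, D i => f j x = true), ∏ i, p i (x i)) + (Dmax : ℝ) ^ k * δ) :=
            Finset.sum_le_sum fun j _ => hper j
        _ = (∑ j : Fin N, ∑ x ∈ Finset.univ.filter
              (fun x : ∀ i, D i => f j x = true), ∏ i, p i (x i))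
            + (N : ℝ) * ((Dmax : ℝ) ^ k * δ) := by
            rw [Finset.sum_add_distrib, Finset.sum_const, Finset.card_univ, Fintype.card_fin,
              nsmul_eq_mul]
        _ < 1 := by nlinarith [hexp, hsmall]
  refine ⟨main, ?_⟩
  by_contra hcon
  push_neg at hcon
  have hcon' : ∀ s : ∀ i, D i, 0 < Y s → ∃ j, f j s = true := by
    intro s hs
    obtain ⟨j, hj⟩ := hcon s hs
    exact ⟨j, by cases h : f j s <;> simp_all⟩
  have h1 : (1:ℝ) ≤ ∑ j : Fin N,
      ∑ x ∈ Finset.univ.filter (fun x : ∀ i, D i => f j x = true), Y x := by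
    calc (1:ℝ) = ∑ x, Y x := hY1.symm
      _ ≤ ∑ x : ∀ i, D i, ∑ j ∈ Finset.univ.filter (fun j => f j x = true), Y x := by
          apply Finset.sum_le_sum
          intro x _
          rcases (hY0 x).eq_or_lt with hx | hx
          · rw [← hx]
            exact Finset.sum_nonneg fun j _ => le_rfl
          · obtain ⟨j, hj⟩ := hcon' x hx
            exact Finset.single_le_sum (fun j' _ => hY0 x)
              (Finset.mem_filter.mpr ⟨Finset.mem_univ j, hj⟩)
      _ = ∑ j : Fin N, ∑ x ∈ Finset.univ.filter
            (fun x : ∀ i, D i => f j x = true), Y x := by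
          simp_rw [Finset.sum_filter]
          exact Finset.sum_comm
  linarith
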